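/- If 3 ≤ m ≤ n and M ≥ 300·n, then for any two distinct u, v ∈ S, the cosine of the angle between z_u and z_v, namely ⟨z_u, z_v⟩/(‖z_u‖·‖z_v‖), lies strictly between −1.01/(m − 1) and −0.99/(m − 1). -/

import Mathlib

set_option linter.unusedSectionVars false
open Finset
open scoped InnerProductSpace

section Aux
variable {V E : Type*} [Fintype V] [DecidableEq V] [Fintype E] [DecidableEq E]
  (G : SimpleGraph V) [DecidableRel G.Adj] (tail head : E → V)

lemma sym2_eq_of_incident (v : V) (e : E)
    (h : head e = v ∨ tail e = v) :
    (s(tail e, head e) : Sym2 V) = s(v, if tail e = v then head e else tail e) := by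
  by_cases ht : tail e = v
  · simp [ht]
  · rcases h with h | h
    · simp [ht, h, Sym2.eq_swap]
    · exact absurd h ht

lemma card_nonloop_incident
    (hadj : ∀ e : E, tail e ≠ head e → G.Adj (tail e) (head e))
    (hinj : ∀ e₁ e₂ : E, tail e₁ ≠ head e₁ → tail e₂ ≠ head e₂ →
      (s(tail e₁, head e₁) : Sym2 V) = s(tail e₂, head e₂) → e₁ = e₂)
    (hsurj : ∀ u v : V, G.Adj u v → ∃ e : E, (s(tail e, head e) : Sym2 V) = s(u, v))
    (v : V) :
    (univ.filter fun e : E => tail e ≠ head e ∧ (head e = v ∨ tail e = v)).card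
      = G.degree v := by
  rw [← SimpleGraph.card_neighborFinset_eq_degree]
  apply Finset.card_bij (fun e _ => if tail e = v then head e else tail e)
  · intro e he
    simp only [mem_filter, mem_univ, true_and] at he
    obtain ⟨hne, hinc⟩ := he
    rw [SimpleGraph.mem_neighborFinset]
    by_cases ht : tail e = v
    · simpa [ht] using hadj e hne
    · rcases hinc with h | h
      · simp only [ht, if_false]
        have := hadj e hne
        rw [h] at this
        exact this.symm
      · exact absurd h ht
  · intro e₁ h₁ e₂ h₂ heq
    simp only [mem_filter, mem_univ, true_and] at h₁ h₂
    apply hinj e₁ e₂ h₁.1 h₂.1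
    rw [sym2_eq_of_incident tail head v e₁ h₁.2, sym2_eq_of_incident tail head v e₂ h₂.2, heq]
  · intro w hw
    rw [SimpleGraph.mem_neighborFinset] at hw
    obtain ⟨e, he⟩ := hsurj v w hw
    have hvw : v ≠ w := hw.ne
    have hne : tail e ≠ head e := by
      intro h
      rw [h] at he
      rw [Sym2.eq_iff] at he
      rcases he with ⟨h1, h2⟩ | ⟨h1, h2⟩ <;> exact hvw (h1 ▸ h2 ▸ rfl)
    rw [Sym2.eq_iff] at he
    refine ⟨e, ?_, ?_⟩
    · simp only [mem_filter, mem_univ, true_and]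
      rcases he with ⟨h1, h2⟩ | ⟨h1, h2⟩
      · exact ⟨hne, Or.inr h1⟩
      · exact ⟨hne, Or.inl h2⟩
    · rcases he with ⟨h1, h2⟩ | ⟨h1, h2⟩
      · simp [h1, h2]
      · have : tail e ≠ v := by rw [h1]; exact fun h => hvw h.symm
        rw [if_neg this]; exact h1

lemma card_incident
    (hadj : ∀ e : E, tail e ≠ head e → G.Adj (tail e) (head e))
    (hinj : ∀ e₁ e₂ : E, tail e₁ ≠ head e₁ → tail e₂ ≠ head e₂ →
      (s(tail e₁, head e₁) : Sym2 V) = s(tail e₂, head e₂) → e₁ = e₂)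
    (hsurj : ∀ u v : V, G.Adj u v → ∃ e : E, (s(tail e, head e) : Sym2 V) = s(u, v))
    (hloops : ∀ v : V, (Finset.univ.filter fun e : E => tail e = v ∧ head e = v).card
        = Fintype.card V - G.degree v)
    (v : V) :
    (univ.filter fun e : E => head e = v ∨ tail e = v).card = Fintype.card V := by
  have hsplit : (univ.filter fun e : E => head e = v ∨ tail e = v)
      = (univ.filter fun e : E => tail e = v ∧ head e = v)
        ∪ (univ.filter fun e : E => tail e ≠ head e ∧ (head e = v ∨ tail e = v)) := by
    ext e
    simp only [mem_filter, mem_univ, true_and, mem_union]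
    constructor
    · intro h
      by_cases hne : tail e = head e
      · left
        rcases h with h | h
        · exact ⟨hne.trans h, h⟩
        · exact ⟨h, hne.symm.trans h⟩
      · exact Or.inr ⟨hne, h⟩
    · rintro (⟨h1, h2⟩ | ⟨_, h⟩)
      · exact Or.inl h2
      · exact h
  have hdisj : Disjoint (univ.filter fun e : E => tail e = v ∧ head e = v)
      (univ.filter fun e : E => tail e ≠ head e ∧ (head e = v ∨ tail e = v)) := by
    rw [Finset.disjoint_filter]
    rintro e _ ⟨h1, h2⟩ ⟨hne, _⟩
    exact hne (h1.trans h2.symm)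
  rw [hsplit, Finset.card_union_of_disjoint hdisj, hloops v,
    card_nonloop_incident G tail head hadj hinj hsurj v]
  have := G.degree_lt_card_verts v
  omega

end Aux

section Aux2
variable {V E : Type*} [Fintype V] [DecidableEq V] [Fintype E] [DecidableEq E]
  (G : SimpleGraph V) [DecidableRel G.Adj] (tail head : E → V)

lemma card_edge_between
    (hadj : ∀ e : E, tail e ≠ head e → G.Adj (tail e) (head e))
    (hinj : ∀ e₁ e₂ : E, tail e₁ ≠ head e₁ → tail e₂ ≠ head e₂ →
      (s(tail e₁, head e₁) : Sym2 V) = s(tail e₂, head e₂) → e₁ = e₂)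
    (hsurj : ∀ u v : V, G.Adj u v → ∃ e : E, (s(tail e, head e) : Sym2 V) = s(u, v))
    (u v : V) (huv : u ≠ v) :
    (univ.filter fun e : E => (s(tail e, head e) : Sym2 V) = s(u, v)).card
      = if G.Adj u v then 1 else 0 := by
  have hnl : ∀ e : E, (s(tail e, head e) : Sym2 V) = s(u, v) → tail e ≠ head e := by
    intro e he h
    rw [h, Sym2.eq_iff] at he
    rcases he with ⟨h1, h2⟩ | ⟨h1, h2⟩ <;> exact huv (h1 ▸ h2 ▸ rfl)
  split_ifs with hAdj
  · obtain ⟨e₀, he₀⟩ := hsurj u v hAdj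
    rw [Finset.card_eq_one]
    refine ⟨e₀, ?_⟩
    ext e
    simp only [mem_filter, mem_univ, true_and, mem_singleton]
    constructor
    · intro he
      exact hinj e e₀ (hnl e he) (hnl e₀ he₀) (he.trans he₀.symm)
    · rintro rfl; exact he₀
  · rw [Finset.card_eq_zero]
    rw [Finset.filter_eq_empty_iff]
    intro e _ he
    have hne := hnl e he
    have := hadj e hne
    rw [Sym2.eq_iff] at he
    rcases he with ⟨h1, h2⟩ | ⟨h1, h2⟩
    · exact hAdj (h1 ▸ h2 ▸ this)
    · exact hAdj (h1 ▸ h2 ▸ this.symm)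

variable (M : ℝ) (x : V → EuclideanSpace ℝ (E ⊕ V))
  (hxE : ∀ (v : V) (e : E),
      x v (Sum.inl e) = if head e = v then -1 else if tail e = v then 1 else 0)
  (hxV : ∀ v u : V, x v (Sum.inr u) = if u = v then M else 0)

include hxE hxV in
lemma inner_x_self
    (hadj : ∀ e : E, tail e ≠ head e → G.Adj (tail e) (head e))
    (hinj : ∀ e₁ e₂ : E, tail e₁ ≠ head e₁ → tail e₂ ≠ head e₂ →
      (s(tail e₁, head e₁) : Sym2 V) = s(tail e₂, head e₂) → e₁ = e₂)
    (hsurj : ∀ u v : V, G.Adj u v → ∃ e : E, (s(tail e, head e) : Sym2 V) = s(u, v))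
    (hloops : ∀ v : V, (Finset.univ.filter fun e : E => tail e = v ∧ head e = v).card
        = Fintype.card V - G.degree v)
    (v : V) :
    ⟪x v, x v⟫_ℝ = M ^ 2 + (Fintype.card V : ℝ) := by
  rw [PiLp.inner_apply]
  simp only [RCLike.inner_apply, conj_trivial]
  rw [Fintype.sum_sum_type]
  have h1 : ∑ e : E, x v (Sum.inl e) * x v (Sum.inl e)
      = ∑ e : E, (if head e = v ∨ tail e = v then (1:ℝ) else 0) := by
    apply Finset.sum_congr rfl
    intro e _
    rw [hxE]
    split_ifs with h1 h2 h3 h3 <;> norm_num <;> tauto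
  have h2 : ∑ w : V, x v (Sum.inr w) * x v (Sum.inr w) = M ^ 2 := by
    simp only [hxV]
    rw [Finset.sum_eq_single v]
    · simp [pow_two]
    · intro b _ hb; simp [hb]
    · simp
  rw [h1, h2, Finset.sum_boole]
  rw [show (univ.filter fun e : E => head e = v ∨ tail e = v).card = Fintype.card V from
    card_incident G tail head hadj hinj hsurj hloops v]
  ring

include hxE hxV in
lemma inner_x_cross
    (hadj : ∀ e : E, tail e ≠ head e → G.Adj (tail e) (head e))
    (hinj : ∀ e₁ e₂ : E, tail e₁ ≠ head e₁ → tail e₂ ≠ head e₂ →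
      (s(tail e₁, head e₁) : Sym2 V) = s(tail e₂, head e₂) → e₁ = e₂)
    (hsurj : ∀ u v : V, G.Adj u v → ∃ e : E, (s(tail e, head e) : Sym2 V) = s(u, v))
    (u v : V) (huv : u ≠ v) :
    ⟪x u, x v⟫_ℝ = if G.Adj u v then (-1 : ℝ) else 0 := by
  rw [PiLp.inner_apply]
  simp only [RCLike.inner_apply, conj_trivial]
  rw [Fintype.sum_sum_type]
  have h2 : ∑ w : V, x u (Sum.inr w) * x v (Sum.inr w) = 0 := by
    apply Finset.sum_eq_zero
    intro w _
    rw [hxV, hxV]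
    split_ifs with h1 h2 h2
    · exact absurd (h1.symm.trans h2) huv
    · simp
    · simp
    · simp
  have h1 : ∑ e : E, x u (Sum.inl e) * x v (Sum.inl e)
      = ∑ e : E, (if (s(tail e, head e) : Sym2 V) = s(u, v) then (-1:ℝ) else 0) := by
    apply Finset.sum_congr rfl
    intro e _
    rw [hxE, hxE]
    by_cases hs : (s(tail e, head e) : Sym2 V) = s(u, v)
    · rw [if_pos hs]
      rw [Sym2.eq_iff] at hs
      rcases hs with ⟨h1, h2⟩ | ⟨h1, h2⟩
      · have : head e ≠ u := by rw [h2]; exact fun h => huv h.symm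
        rw [if_neg this, if_pos h1, if_pos h2]; ring
      · rw [if_pos h2, if_neg (by rw [h2]; exact huv), if_pos h1]; ring
    · rw [if_neg hs]
      by_contra hne
      have hu : head e = u ∨ (¬ head e = u ∧ tail e = u) := by
        by_cases hh : head e = u
        · exact Or.inl hh
        · by_cases ht : tail e = u
          · exact Or.inr ⟨hh, ht⟩
          · simp [hh, ht] at hne
      have hv : head e = v ∨ (¬ head e = v ∧ tail e = v) := by
        by_cases hh : head e = v
        · exact Or.inl hh
        · by_cases ht : tail e = v
          · exact Or.inr ⟨hh, ht⟩
          · simp [hh, ht] at hne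
      apply hs
      rcases hu with hu | ⟨hu', hu⟩ <;> rcases hv with hv | ⟨hv', hv⟩
      · exact absurd (hu.symm.trans hv) huv
      · rw [hv, hu, Sym2.eq_swap]
      · rw [hu, hv]
      · exact absurd (hu.symm.trans hv) huv
  simp only [mul_comm ((x v).ofLp _) ((x u).ofLp _)]
  rw [h1, h2, add_zero, Finset.sum_ite, Finset.sum_const, Finset.sum_const_zero, add_zero,
    card_edge_between G tail head hadj hinj hsurj u v huv]
  split_ifs <;> simp

end Aux2
lemma le_mul_of_sq_le_sq {c p q : ℝ} (hc : 0 ≤ c) (hp : 0 ≤ p) (hq : 0 ≤ q)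
    (h : c * c ≤ (p * q) * (p * q)) : c ≤ p * q := by
  nlinarith [mul_nonneg hp hq]

set_option maxHeartbeats 1000000 in
theorem angle_between_z_bounds
    {V E : Type*} [Fintype V] [DecidableEq V] [Fintype E] [DecidableEq E]
    (G : SimpleGraph V) [DecidableRel G.Adj]
    (tail head : E → V)
    (hadj : ∀ e : E, tail e ≠ head e → G.Adj (tail e) (head e))
    (hinj : ∀ e₁ e₂ : E, tail e₁ ≠ head e₁ → tail e₂ ≠ head e₂ →
      (s(tail e₁, head e₁) : Sym2 V) = s(tail e₂, head e₂) → e₁ = e₂)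
    (hsurj : ∀ u v : V, G.Adj u v → ∃ e : E, (s(tail e, head e) : Sym2 V) = s(u, v))
    (hloops : ∀ v : V, (Finset.univ.filter fun e : E => tail e = v ∧ head e = v).card
        = Fintype.card V - G.degree v)
    (M : ℝ) (hM : 0 < M)
    (x : V → EuclideanSpace ℝ (E ⊕ V))
    (hxE : ∀ (v : V) (e : E),
      x v (Sum.inl e) = if head e = v then -1 else if tail e = v then 1 else 0)
    (hxV : ∀ v u : V, x v (Sum.inr u) = if u = v then M else 0)
    (S : Finset V) (m : ℕ) (hS : S.card = m)
    (c : EuclideanSpace ℝ (E ⊕ V)) (hc : c = (m : ℝ)⁻¹ • ∑ v ∈ S, x v)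
    (hm : 3 ≤ m) (hmn : m ≤ Fintype.card V)
    (hM300 : 300 * (Fintype.card V : ℝ) ≤ M)
    (z : V → EuclideanSpace ℝ (E ⊕ V)) (hz : ∀ v : V, z v = x v - c)
 :
    ∀ u ∈ S, ∀ v ∈ S, u ≠ v →
      -1.01 / ((m : ℝ) - 1) < ⟪z u, z v⟫_ℝ / (‖z u‖ * ‖z v‖) ∧
      ⟪z u, z v⟫_ℝ / (‖z u‖ * ‖z v‖) < -0.99 / ((m : ℝ) - 1) := by
  intro u hu v hv huv
  -- basic real quantities
  set nR : ℝ := (Fintype.card V : ℝ) with hnR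
  set mR : ℝ := (m : ℝ) with hmR
  have hm3 : (3 : ℝ) ≤ mR := by rw [hmR]; exact_mod_cast hm
  have hnm : mR ≤ nR := by rw [hmR, hnR]; exact_mod_cast hmn
  have hmpos : (0 : ℝ) < mR := by linarith
  set A : ℝ := M ^ 2 + nR with hA
  have hself : ∀ w : V, ⟪x w, x w⟫_ℝ = A :=
    inner_x_self G tail head M x hxE hxV hadj hinj hsurj hloops
  have hcross : ∀ a b : V, a ≠ b → ⟪x a, x b⟫_ℝ = if G.Adj a b then (-1:ℝ) else 0 :=
    inner_x_cross G tail head M x hxE hxV hadj hinj hsurj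
  set sIP : V → ℝ := fun w => ∑ w' ∈ S, ⟪x w, x w'⟫_ℝ with hsIP
  set T : ℝ := ∑ w ∈ S, sIP w with hT
  -- bounds on sIP
  have hs_bounds : ∀ w ∈ S, A - (mR - 1) ≤ sIP w ∧ sIP w ≤ A := by
    intro w hw
    have hsplit : sIP w = ⟪x w, x w⟫_ℝ + ∑ w' ∈ S.erase w, ⟪x w, x w'⟫_ℝ :=
      (Finset.add_sum_erase S _ hw).symm
    have hb : ∀ w' ∈ S.erase w, -1 ≤ ⟪x w, x w'⟫_ℝ ∧ ⟪x w, x w'⟫_ℝ ≤ 0 := by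
      intro w' hw'
      rw [hcross w w' (Finset.ne_of_mem_erase hw').symm]
      split_ifs <;> norm_num
    have hcard : ((S.erase w).card : ℝ) = mR - 1 := by
      rw [Finset.card_erase_of_mem hw, hS]
      have : 1 ≤ m := by omega
      push_cast [Nat.cast_sub this]
      ring
    have hge : -(mR - 1) ≤ ∑ w' ∈ S.erase w, ⟪x w, x w'⟫_ℝ := by
      have := Finset.card_nsmul_le_sum (S.erase w) (fun w' => ⟪x w, x w'⟫_ℝ) (-1 : ℝ)
        (fun i hi => (hb i hi).1)
      rw [nsmul_eq_mul, hcard] at this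
      linarith
    have hle : ∑ w' ∈ S.erase w, ⟪x w, x w'⟫_ℝ ≤ 0 :=
      Finset.sum_nonpos (fun i hi => (hb i hi).2)
    rw [hsplit, hself w]
    constructor <;> linarith
  have hsu := hs_bounds u hu
  have hsv := hs_bounds v hv
  -- bounds on T
  have hT_bounds : mR * (A - (mR - 1)) ≤ T ∧ T ≤ mR * A := by
    constructor
    · have := Finset.sum_le_sum (fun w hw => (hs_bounds w hw).1)
      rw [Finset.sum_const, hS, nsmul_eq_mul] at this
      calc mR * (A - (mR - 1)) = (m : ℝ) * (A - (mR - 1)) := by rw [hmR]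
        _ ≤ T := this
    · have := Finset.sum_le_sum (fun w hw => (hs_bounds w hw).2)
      rw [Finset.sum_const, hS, nsmul_eq_mul] at this
      calc T ≤ (m : ℝ) * A := this
        _ = mR * A := by rw [hmR]
  -- inner products with c
  set j : ℝ := (m : ℝ)⁻¹ with hj
  have hjm : j * mR = 1 := by
    rw [hj, hmR]
    field_simp
  have hjpos : 0 < j := by
    rw [hj]
    positivity
  have hxc : ∀ w : V, ⟪x w, c⟫_ℝ = j * sIP w := by
    intro w
    rw [hc, real_inner_smul_right, inner_sum]
  have hcx : ∀ w : V, ⟪c, x w⟫_ℝ = j * sIP w := by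
    intro w
    rw [real_inner_comm]
    exact hxc w
  have hcc : ⟪c, c⟫_ℝ = j * (j * T) := by
    rw [hc, real_inner_smul_left, real_inner_smul_right, sum_inner]
    congr 1
    congr 1
    rw [hT]
    apply Finset.sum_congr rfl
    intro w _
    rw [inner_sum]
  -- expansion of the z inner products
  have hzz : ∀ a b : V, ⟪z a, z b⟫_ℝ
      = ⟪x a, x b⟫_ℝ - j * sIP a - j * sIP b + j * (j * T) := by
    intro a b
    rw [hz, hz, inner_sub_left, inner_sub_right, inner_sub_right, hxc, hcx, hcc]
    ring
  have hnorm : ∀ w : V, ‖z w‖ ^ 2 = A - 2 * (j * sIP w) + j * (j * T) := by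
    intro w
    rw [← real_inner_self_eq_norm_sq, hzz w w, hself w]
    ring
  clear_value nR mR sIP T j A
  -- numeric bounds
  set a : ℝ := j * A with ha_def
  clear_value a
  have hAm : 270000 * mR ≤ A := by
    have hn3 : (3 : ℝ) ≤ nR := le_trans hm3 hnm
    have hn0 : (0 : ℝ) ≤ 300 * nR := by linarith
    have hM2 : (300 * nR) * (300 * nR) ≤ M * M := mul_self_le_mul_self hn0 hM300
    rw [hA]
    have hprod : 0 ≤ nR * (nR - 3) := mul_nonneg (by linarith) (by linarith)
    linarith only [hM2, hprod, hnm, hn3, hm3]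
  have ha : 270000 ≤ a := by
    have h1 : j * (270000 * mR) ≤ j * A := mul_le_mul_of_nonneg_left hAm hjpos.le
    calc (270000 : ℝ) = j * (270000 * mR) := by
          rw [show j * (270000 * mR) = 270000 * (j * mR) by ring, hjm]; ring
      _ ≤ j * A := h1
      _ = a := ha_def.symm
  -- bounds for j * sIP and j * (j * T)
  have hjs : ∀ w ∈ S, a - 1 + j ≤ j * sIP w ∧ j * sIP w ≤ a := by
    intro w hw
    obtain ⟨h1, h2⟩ := hs_bounds w hw
    constructor
    · have := mul_le_mul_of_nonneg_left h1 hjpos.le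
      have hexp : j * (A - (mR - 1)) = a - (j * mR) + j := by rw [ha_def]; ring
      rw [hexp, hjm] at this
      linarith
    · have := mul_le_mul_of_nonneg_left h2 hjpos.le
      rw [ha_def]
      linarith
  have hjsu := hjs u hu
  have hjsv := hjs v hv
  have hjT : a - 1 + j ≤ j * (j * T) ∧ j * (j * T) ≤ a := by
    obtain ⟨h1, h2⟩ := hT_bounds
    constructor
    · have h3 : j * (mR * (A - (mR - 1))) ≤ j * T := mul_le_mul_of_nonneg_left h1 hjpos.le
      have h4 : A - (mR - 1) ≤ j * T := by
        rw [← mul_assoc, hjm, one_mul] at h3; exact h3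
      have h5 : j * (A - (mR - 1)) ≤ j * (j * T) := mul_le_mul_of_nonneg_left h4 hjpos.le
      have hexp : j * (A - (mR - 1)) = a - (j * mR) + j := by rw [ha_def]; ring
      rw [hexp, hjm] at h5
      linarith
    · have h3 : j * T ≤ j * (mR * A) := mul_le_mul_of_nonneg_left h2 hjpos.le
      have h4 : j * T ≤ A := by
        rw [← mul_assoc, hjm, one_mul] at h3; exact h3
      have h5 : j * (j * T) ≤ j * A := mul_le_mul_of_nonneg_left h4 hjpos.le
      rw [ha_def]
      linarith
  -- epsilon bound
  have hceps : -1 ≤ ⟪x u, x v⟫_ℝ ∧ ⟪x u, x v⟫_ℝ ≤ 0 := by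
    rw [hcross u v huv]
    split_ifs <;> norm_num
  -- final bounds on N and norms
  set N : ℝ := ⟪z u, z v⟫_ℝ with hNdef
  clear_value N
  have hNle : N ≤ -a + 2 := by
    rw [hNdef, hzz u v]
    linarith only [hceps.2, hjsu.1, hjsv.1, hjT.2, hjpos]
  have hNge : -a - 2 ≤ N := by
    rw [hNdef, hzz u v]
    linarith only [hceps.1, hjsu.2, hjsv.2, hjT.1, hjpos]
  set pu : ℝ := ‖z u‖ with hpu_def
  set pv : ℝ := ‖z v‖ with hpv_def
  have hpu0 : 0 ≤ pu := norm_nonneg _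
  have hpv0 : 0 ≤ pv := norm_nonneg _
  set B : ℝ := a * (mR - 1) with hB
  clear_value B
  have hBval : A - a = B := by
    have : A = a * mR := by rw [ha_def, mul_comm j A, mul_assoc, hjm, mul_one]
    rw [hB, this]; ring
  have hBlarge : 540000 ≤ B := by
    rw [hB]
    have hprod : 0 ≤ (a - 270000) * (mR - 3) := mul_nonneg (by linarith) (by linarith)
    linarith only [hprod, ha, hm3]
  have hpu2 : B - 2 ≤ pu ^ 2 ∧ pu ^ 2 ≤ B + 2 := by
    rw [hpu_def, hnorm u]
    constructor
    · linarith only [hjsu.2, hjT.1, hjpos, hBval]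
    · linarith only [hjsu.1, hjT.2, hjpos, hBval]
  have hpv2 : B - 2 ≤ pv ^ 2 ∧ pv ^ 2 ≤ B + 2 := by
    rw [hpv_def, hnorm v]
    constructor
    · linarith only [hjsv.2, hjT.1, hjpos, hBval]
    · linarith only [hjsv.1, hjT.2, hjpos, hBval]
  have hD_le : pu * pv ≤ B + 2 := by
    linarith only [sq_nonneg (pu - pv), hpu2.2, hpv2.2]
  have hD_ge : B - 2 ≤ pu * pv := by
    have hc0 : (0 : ℝ) < B - 2 := by linarith
    have h1 : (B - 2) * (B - 2) ≤ pu ^ 2 * pv ^ 2 :=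
      mul_le_mul hpu2.1 hpv2.1 hc0.le (by positivity)
    exact le_mul_of_sq_le_sq hc0.le hpu0 hpv0 (by linarith only [h1])
  have hDpos : 0 < pu * pv := by linarith
  have hm1pos : (0 : ℝ) < mR - 1 := by linarith
  have hkey : 0 ≤ (a - 270000) * (mR - 3) := mul_nonneg (by linarith) (by linarith)
  have hP1 : 0 ≤ (N - (-a - 2)) * (mR - 1) :=
    mul_nonneg (by linarith only [hNge]) (by linarith)
  have hP2 : 0 ≤ ((-a + 2) - N) * (mR - 1) :=
    mul_nonneg (by linarith only [hNle]) (by linarith)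
  constructor
  · rw [div_lt_div_iff₀ hm1pos hDpos]
    linarith only [hP1, hD_ge, hB, hkey, ha, hm3]
  · rw [div_lt_div_iff₀ hDpos hm1pos]
    linarith only [hP2, hD_le, hB, hkey, ha, hm3]
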